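/- arXiv:1809.09014 — 3 statements merged into one kernel-verified Lean document; each statement's English description precedes it below -/
import Mathlib

section
/- Let H = PΛP⁻¹ be an eigendecomposable k×k matrix with eigenvalues λ₁,…,λ_k, and let Σ be a k×k matrix. Then ∫₀ᵗ e^{-Hv} Σ e^{-Hᵀv} dv = P ( M ⊙ (P⁻¹ Σ P⁻ᵀ) ) Pᵀ, where M is the k×k matrix with entries M_{ij} = (1 - e^{-(λ_i+λ_j)t})/(λ_i+λ_j) when λ_i + λ_j ≠ 0 and M_{ij} = t when λ_i + λ_j = 0, and ⊙ denotes the entrywise (Hadamard) product. -/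
open Matrix MeasureTheory

/-- Closed form for the OU covariance integral
`∫₀ᵗ e^{-Hv} Σ e^{-Hᵀv} dv = P (M ⊙ (P⁻¹ Σ P⁻ᵀ)) Pᵀ` for an eigendecomposable
`H = P Λ P⁻¹`, where `M i j = (1 - e^{-(λᵢ+λⱼ)t})/(λᵢ+λⱼ)` when `λᵢ+λⱼ ≠ 0` and
`M i j = t` otherwise, and `⊙` is the Hadamard (entrywise) product. -/
theorem ou_covariance_closed_form {k : ℕ}
    (H P Sg : Matrix (Fin k) (Fin k) ℂ) (Λ : Fin k → ℂ)
    (hP : IsUnit P.det)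
    (hH : H = P * Matrix.diagonal Λ * P⁻¹)
    (t : ℝ) (ht : 0 < t)
    (M : Matrix (Fin k) (Fin k) ℂ)
    (hM : ∀ i j, M i j =
      if Λ i + Λ j = 0 then (t : ℂ)
      else (1 - Complex.exp (-(Λ i + Λ j) * t)) / (Λ i + Λ j)) :
    ∀ i j,
      (∫ v in (0:ℝ)..t,
        (NormedSpace.exp ((-(v : ℂ)) • H) * Sg *
          NormedSpace.exp ((-(v : ℂ)) • Hᵀ)) i j)
      = (P * (Matrix.hadamard M (P⁻¹ * Sg * (P⁻¹)ᵀ)) * Pᵀ) i j := by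
  intro i j
  have hPu : IsUnit P := (Matrix.isUnit_iff_isUnit_det _).mpr hP
  set A := P⁻¹ * Sg * (P⁻¹)ᵀ with hA
  have hexp : ∀ v : ℝ, NormedSpace.exp ((-(v : ℂ)) • H)
      = P * Matrix.diagonal (fun a => Complex.exp (-(v : ℂ) * Λ a)) * P⁻¹ := by
    intro v
    have : (-(v : ℂ)) • H = P * Matrix.diagonal (fun a => -(v : ℂ) * Λ a) * P⁻¹ := by
      rw [hH]
      have : (fun a => -(v : ℂ) * Λ a) = (-(v:ℂ)) • Λ := by
        funext a; simp [Pi.smul_apply, smul_eq_mul]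
      rw [this, Matrix.diagonal_smul, Matrix.mul_assoc, mul_smul_comm, smul_mul_assoc,
        ← Matrix.mul_assoc]
    rw [this, Matrix.exp_conj _ _ hPu, Matrix.exp_diagonal]
    congr 1
    congr 1
    funext a
    simp [Pi.exp_def, Complex.exp_eq_exp_ℂ]
  have key : ∀ v : ℝ,
      (NormedSpace.exp ((-(v : ℂ)) • H) * Sg *
        NormedSpace.exp ((-(v : ℂ)) • Hᵀ)) i j
      = ∑ a, ∑ b, P i a * A a b * Pᵀ b j * Complex.exp (-(Λ a + Λ b) * v) := by
    intro v
    have h2 : NormedSpace.exp ((-(v : ℂ)) • Hᵀ)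
        = (P⁻¹)ᵀ * Matrix.diagonal (fun a => Complex.exp (-(v : ℂ) * Λ a)) * Pᵀ := by
      have : (-(v : ℂ)) • Hᵀ = ((-(v : ℂ)) • H)ᵀ := by rw [Matrix.transpose_smul]
      rw [this, Matrix.exp_transpose, hexp v, Matrix.transpose_mul, Matrix.transpose_mul,
        Matrix.diagonal_transpose, Matrix.mul_assoc]
    rw [hexp v, h2]
    have : P * Matrix.diagonal (fun a => Complex.exp (-(v : ℂ) * Λ a)) * P⁻¹ * Sg *
        ((P⁻¹)ᵀ * Matrix.diagonal (fun a => Complex.exp (-(v : ℂ) * Λ a)) * Pᵀ)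
      = P * (Matrix.diagonal (fun a => Complex.exp (-(v : ℂ) * Λ a)) * A *
          Matrix.diagonal (fun a => Complex.exp (-(v : ℂ) * Λ a))) * Pᵀ := by
      rw [hA]; noncomm_ring [Matrix.mul_assoc]
    have hDAD : ∀ a c : Fin k, ((Matrix.diagonal fun a => Complex.exp (-(v:ℂ) * Λ a)) * A *
        (Matrix.diagonal fun a => Complex.exp (-(v:ℂ) * Λ a))) a c
        = Complex.exp (-(v:ℂ) * Λ a) * A a c * Complex.exp (-(v:ℂ) * Λ c) := by
      intro a c
      rw [Matrix.mul_diagonal, Matrix.diagonal_mul]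
    rw [this, Matrix.mul_apply]
    simp only [Matrix.mul_apply, hDAD, Finset.sum_mul]
    rw [Finset.sum_comm]
    refine Finset.sum_congr rfl fun a _ => Finset.sum_congr rfl fun b _ => ?_
    rw [neg_add, add_mul, Complex.exp_add]
    ring
  have hcont : ∀ a b : Fin k, Continuous fun v : ℝ =>
      P i a * A a b * Pᵀ b j * Complex.exp (-(Λ a + Λ b) * v) := by
    intro a b
    exact continuous_const.mul (Complex.continuous_exp.comp
      (continuous_const.mul (Complex.continuous_ofReal)))
  calc (∫ v in (0:ℝ)..t,
        (NormedSpace.exp ((-(v : ℂ)) • H) * Sg *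
          NormedSpace.exp ((-(v : ℂ)) • Hᵀ)) i j)
      = ∫ v in (0:ℝ)..t, ∑ a, ∑ b, P i a * A a b * Pᵀ b j * Complex.exp (-(Λ a + Λ b) * v) := by
        simp_rw [key]
    _ = ∑ a, ∑ b, ∫ v in (0:ℝ)..t, P i a * A a b * Pᵀ b j * Complex.exp (-(Λ a + Λ b) * v) := by
        rw [intervalIntegral.integral_finset_sum]
        · exact Finset.sum_congr rfl fun a _ =>
            intervalIntegral.integral_finset_sum (fun b _ => ((hcont a b).intervalIntegrable _ _))
        · intro a _
          exact (continuous_finset_sum _ fun b _ => hcont a b).intervalIntegrable _ _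
    _ = ∑ a, ∑ b, P i a * A a b * Pᵀ b j * M a b := by
        refine Finset.sum_congr rfl fun a _ => Finset.sum_congr rfl fun b _ => ?_
        rw [intervalIntegral.integral_const_mul]
        congr 1
        rw [hM a b]
        by_cases h : Λ a + Λ b = 0
        · simp [h]
        · have hc : -(Λ a + Λ b) ≠ 0 := neg_ne_zero.mpr h
          rw [if_neg h]
          have := integral_exp_mul_complex (a := (0:ℝ)) (b := t) hc
          simp_rw [mul_comm (-(Λ a + Λ b)) _] at this ⊢
          rw [this]
          simp only [Complex.ofReal_zero, zero_mul, Complex.exp_zero]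
          rw [div_neg, ← neg_div, neg_sub]
    _ = (P * (Matrix.hadamard M A) * Pᵀ) i j := by
        simp only [Matrix.mul_apply, Matrix.hadamard_apply, Finset.sum_mul]
        rw [Finset.sum_comm]
        refine Finset.sum_congr rfl fun b _ => Finset.sum_congr rfl fun a _ => ?_
        ring
end

section
/- For the ACDC model with V(t) = ∫_{t^s}^{t^e} e^{sR} Σ Σᵀ e^{sRᵀ} ds where R is eigendecomposable R = PΛP⁻¹ with eigenvalues ρ_i, V(t) = P ( N ⊙ (P⁻¹ ΣΣᵀ P⁻ᵀ) ) Pᵀ where N_{ij} = (e^{(ρ_i+ρ_j)t^e} - e^{(ρ_i+ρ_j)t^s})/(ρ_i+ρ_j) when ρ_i+ρ_j ≠ 0 and N_{ij} = t^e - t^s otherwise. -/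
open Matrix MeasureTheory

/-- Closed form for the ACDC branch covariance
`V = ∫_{tₛ}^{tₑ} e^{sR} ΣΣᵀ e^{sRᵀ} ds = P (N ⊙ (P⁻¹ ΣΣᵀ P⁻ᵀ)) Pᵀ` for an
eigendecomposable `R = P Λ P⁻¹` with eigenvalues `ρ`, where
`N i j = (e^{(ρᵢ+ρⱼ)tₑ} - e^{(ρᵢ+ρⱼ)tₛ})/(ρᵢ+ρⱼ)` when `ρᵢ+ρⱼ ≠ 0` and
`N i j = tₑ - tₛ` otherwise. -/
theorem acdc_covariance_closed_form {k : ℕ}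
    (R P Sg : Matrix (Fin k) (Fin k) ℂ) (ρ : Fin k → ℂ)
    (hP : IsUnit P.det)
    (hR : R = P * Matrix.diagonal ρ * P⁻¹)
    (ts te : ℝ) (hts : 0 ≤ ts) (hte : ts < te)
    (N : Matrix (Fin k) (Fin k) ℂ)
    (hN : ∀ i j, N i j =
      if ρ i + ρ j = 0 then ((te - ts : ℝ) : ℂ)
      else (Complex.exp ((ρ i + ρ j) * te) - Complex.exp ((ρ i + ρ j) * ts)) /
        (ρ i + ρ j)) :
    ∀ i j,
      (∫ s in ts..te,
        (NormedSpace.exp ((s : ℂ) • R) * (Sg * Sgᵀ) *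
          NormedSpace.exp ((s : ℂ) • Rᵀ)) i j)
      = (P * (Matrix.hadamard N (P⁻¹ * (Sg * Sgᵀ) * (P⁻¹)ᵀ)) * Pᵀ) i j := by
  intro i j
  set M : Matrix (Fin k) (Fin k) ℂ := P⁻¹ * (Sg * Sgᵀ) * (P⁻¹)ᵀ with hM
  have hPu : IsUnit P := (Matrix.isUnit_iff_isUnit_det _).mpr hP
  -- exp of s • R
  have hexp : ∀ s : ℝ, NormedSpace.exp ((s : ℂ) • R)
      = P * Matrix.diagonal (fun a => Complex.exp (ρ a * s)) * P⁻¹ := by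
    intro s
    rw [hR]
    have h1 : (s : ℂ) • (P * Matrix.diagonal ρ * P⁻¹)
        = P * Matrix.diagonal (fun a => ρ a * (s : ℂ)) * P⁻¹ := by
      have : (fun a => ρ a * (s : ℂ)) = (s : ℂ) • ρ := by
        ext a; simp [mul_comm]
      simp [this, Matrix.diagonal_smul, Matrix.smul_mul, Matrix.mul_smul]
    rw [h1, Matrix.exp_conj P _ hPu, Matrix.exp_diagonal]
    congr 2
    rw [Pi.exp_def]
    funext a
    simp [← Complex.exp_eq_exp_ℂ]
  -- integrand entry formula
  have key : ∀ s : ℝ,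
      (NormedSpace.exp ((s : ℂ) • R) * (Sg * Sgᵀ) *
        NormedSpace.exp ((s : ℂ) • Rᵀ)) i j
      = ∑ a, ∑ b, P i a * (Complex.exp ((ρ a + ρ b) * s) * M a b) * Pᵀ b j := by
    intro s
    have ht : (s : ℂ) • Rᵀ = ((s : ℂ) • R)ᵀ := by rw [Matrix.transpose_smul]
    rw [ht, Matrix.exp_transpose, hexp s,
        Matrix.transpose_mul, Matrix.transpose_mul, Matrix.diagonal_transpose]
    have : P * Matrix.diagonal (fun a => Complex.exp (ρ a * s)) * P⁻¹ * (Sg * Sgᵀ) *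
        ((P⁻¹)ᵀ * (Matrix.diagonal (fun a => Complex.exp (ρ a * s)) * Pᵀ))
        = P * (Matrix.diagonal (fun a => Complex.exp (ρ a * s)) * M *
            Matrix.diagonal (fun a => Complex.exp (ρ a * s))) * Pᵀ := by
      simp only [hM, Matrix.mul_assoc]
    have hX : Matrix.diagonal (fun a => Complex.exp (ρ a * s)) * M *
        Matrix.diagonal (fun a => Complex.exp (ρ a * s))
        = Matrix.of (fun a b => Complex.exp (ρ a * s) * M a b * Complex.exp (ρ b * s)) := by
      ext a b
      simp [Matrix.mul_diagonal, Matrix.diagonal_mul]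
    rw [this, hX]
    simp only [Matrix.mul_apply, Matrix.of_apply, Finset.sum_mul]
    rw [Finset.sum_comm]
    refine Finset.sum_congr rfl fun a _ => Finset.sum_congr rfl fun b _ => ?_
    rw [add_mul, Complex.exp_add]
    ring
  have hint : ∀ c : ℂ, (∫ s in ts..te, Complex.exp (c * s))
      = if c = 0 then ((te - ts : ℝ) : ℂ)
        else (Complex.exp (c * te) - Complex.exp (c * ts)) / c := by
    intro c
    by_cases hc : c = 0
    · simp [hc, sub_eq_add_neg]
    · rw [if_neg hc, integral_exp_mul_complex hc]
  have hcont : ∀ a b : Fin k, IntervalIntegrable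
      (fun s : ℝ => P i a * (Complex.exp ((ρ a + ρ b) * s) * M a b) * Pᵀ b j)
      volume ts te := by
    intro a b
    apply Continuous.intervalIntegrable
    fun_prop
  have hterm : ∀ a b : Fin k,
      (∫ s in ts..te, P i a * (Complex.exp ((ρ a + ρ b) * s) * M a b) * Pᵀ b j)
      = P i a * (N a b * M a b) * Pᵀ b j := by
    intro a b
    have h1 : (fun s : ℝ => P i a * (Complex.exp ((ρ a + ρ b) * s) * M a b) * Pᵀ b j)
        = fun s : ℝ => (P i a * M a b * Pᵀ b j) * Complex.exp ((ρ a + ρ b) * s) := by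
      funext s; ring
    rw [h1, intervalIntegral.integral_const_mul, hint (ρ a + ρ b), hN a b]
    ring
  calc (∫ s in ts..te,
        (NormedSpace.exp ((s : ℂ) • R) * (Sg * Sgᵀ) *
          NormedSpace.exp ((s : ℂ) • Rᵀ)) i j)
      = ∫ s in ts..te, ∑ a, ∑ b,
          P i a * (Complex.exp ((ρ a + ρ b) * s) * M a b) * Pᵀ b j := by
        exact intervalIntegral.integral_congr fun s _ => key s
    _ = ∑ a, ∑ b, (∫ s in ts..te,
          P i a * (Complex.exp ((ρ a + ρ b) * s) * M a b) * Pᵀ b j) := by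
        have step1 := intervalIntegral.integral_finset_sum (μ := volume)
          (a := ts) (b := te) (s := Finset.univ)
          (f := fun (a : Fin k) (s : ℝ) => ∑ b,
            P i a * (Complex.exp ((ρ a + ρ b) * s) * M a b) * Pᵀ b j)
          (fun a _ => by
            have h := IntervalIntegrable.sum (μ := volume) (a := ts) (b := te)
              Finset.univ
              (f := fun (b : Fin k) (s : ℝ) =>
                P i a * (Complex.exp ((ρ a + ρ b) * s) * M a b) * Pᵀ b j)
              (fun b _ => hcont a b)
            rw [Finset.sum_fn] at h
            exact h)
        rw [step1]
        exact Finset.sum_congr rfl fun a _ =>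
          intervalIntegral.integral_finset_sum (μ := volume)
            (a := ts) (b := te) (s := Finset.univ)
            (f := fun (b : Fin k) (s : ℝ) =>
              P i a * (Complex.exp ((ρ a + ρ b) * s) * M a b) * Pᵀ b j)
            (fun b _ => hcont a b)
    _ = ∑ a, ∑ b, P i a * (N a b * M a b) * Pᵀ b j := by
        exact Finset.sum_congr rfl fun a _ => Finset.sum_congr rfl fun b _ => hterm a b
    _ = (P * (Matrix.hadamard N M) * Pᵀ) i j := by
        simp only [Matrix.mul_apply, Matrix.hadamard_apply, Finset.sum_mul]
        rw [Finset.sum_comm]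
end

section
/- Consider a rooted tree with tips 1,…,N whose trait transition density from parent j to child i is exp(x_iᵀA_i x_i + x_iᵀb_i + x_jᵀC_i x_j + x_jᵀd_i + x_jᵀE_i x_i + f_i), with each A_i + L_i symmetric negative-definite where L_i is defined recursively below. Then for every internal node j there exist a matrix L_j, vector m_j and scalar r_j such that the density of all tip data descending from j, conditional on x_j, equals exp(x_jᵀL_j x_j + x_jᵀm_j + r_j); furthermore L_j, m_j, r_j are given by summing, over tip children i of j, the terms (C_i, d_i + E_i x_i, x_iᵀA_i x_i + x_iᵀb_i + f_i), and over internal children i of j, the terms (C_i - (1/4)E_i(A_i+L_i)⁻¹E_iᵀ, d_i - (1/2)E_i(A_i+L_i)⁻¹(b_i+m_i), f_i + r_i + (k_i/2)log(2π) - (1/2)log|(-2)(A_i+L_i)| - (1/4)(b_i+m_i)ᵀ(A_i+L_i)⁻¹(b_i+m_i)). -/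
open Matrix MeasureTheory Real

lemma int1d {b : ℝ} (hb : 0 < b) (c : ℝ) :
    ∫ x : ℝ, Real.exp (-b*x^2 + c*x) = Real.sqrt (π/b) * Real.exp (c^2/(4*b)) := by
  have h : ∀ x : ℝ, -b*x^2 + c*x = -b*(x + (-(c/(2*b))))^2 + c^2/(4*b) := by
    intro x; field_simp; ring
  simp_rw [h, Real.exp_add, integral_mul_const,
    integral_add_right_eq_self (fun x => Real.exp (-b*x^2)) (-(c/(2*b))),
    integral_gaussian]

lemma intCoV {k : ℕ} (M : Matrix (Fin k) (Fin k) ℝ) (hM : M.det ≠ 0)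
    (f : (Fin k → ℝ) → ℝ) :
    ∫ x : Fin k → ℝ, f (M.mulVec x) = |M.det|⁻¹ * ∫ x, f x := by
  have hinv : Invertible M := M.invertibleOfIsUnitDet (Ne.isUnit hM)
  let e : (Fin k → ℝ) ≃ₗ[ℝ] (Fin k → ℝ) := M.toLinearEquiv' hinv
  have hme : MeasurableEmbedding (Matrix.toLin' M) := by
    have := (e.toContinuousLinearEquiv).toHomeomorph.measurableEmbedding
    exact this
  have hmap := Real.map_matrix_volume_pi_eq_smul_volume_pi hM
  calc ∫ x : Fin k → ℝ, f (M.mulVec x)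
      = ∫ x, f (Matrix.toLin' M x) := by simp [Matrix.toLin'_apply]
    _ = ∫ y, f y ∂(Measure.map (Matrix.toLin' M) volume) := by
        rw [hme.integral_map]
    _ = ∫ y, f y ∂(ENNReal.ofReal |M.det⁻¹| • volume) := by
        rw [hmap]
    _ = |M.det|⁻¹ * ∫ x, f x := by
        rw [integral_smul_measure]
        simp [abs_inv, ENNReal.toReal_ofReal (abs_nonneg _)]

lemma dot_rot {a b : ℕ} (U : Matrix (Fin a) (Fin b) ℝ) (x : Fin b → ℝ) (z : Fin a → ℝ) :
    (U.mulVec x) ⬝ᵥ z = x ⬝ᵥ (Uᵀ.mulVec z) := by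
  rw [Matrix.dotProduct_mulVec, Matrix.vecMul_transpose]

lemma gaussInt {k : ℕ} (S : Matrix (Fin k) (Fin k) ℝ) (hS : (-S).PosDef)
    (u : Fin k → ℝ) (c : ℝ) :
    ∫ x : Fin k → ℝ, Real.exp (x ⬝ᵥ S.mulVec x + x ⬝ᵥ u + c)
      = Real.exp (((k:ℝ)/2) * Real.log (2 * π)
          - (1/2) * Real.log (((-2:ℝ) • S).det)
          - (1/4) * (u ⬝ᵥ S⁻¹.mulVec u) + c) := by
  set T := -S with hTdef
  have hT : T.PosDef := hS
  have hH := hT.1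
  set U : Matrix (Fin k) (Fin k) ℝ := (hH.eigenvectorUnitary : Matrix (Fin k) (Fin k) ℝ) with hUdef
  set d : Fin k → ℝ := hH.eigenvalues with hddef
  have hdpos : ∀ i, 0 < d i := fun i => hT.eigenvalues_pos i
  have hstar : star U = Uᵀ := by ext i j; simp [Matrix.star_apply]
  have hspec : T = U * Matrix.diagonal d * Uᵀ := by
    have := hH.spectral_theorem
    rw [Unitary.conjStarAlgAut_apply] at this
    rw [← hstar]; exact this
  have hUtU : Uᵀ * U = 1 := by
    rw [← hstar]; exact (Matrix.mem_unitaryGroup_iff').mp hH.eigenvectorUnitary.2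
  have hUUt : U * Uᵀ = 1 := by
    rw [← hstar]; exact (Matrix.mem_unitaryGroup_iff).mp hH.eigenvectorUnitary.2
  have hdetU : U.det * U.det = 1 := by
    have := congrArg Matrix.det hUUt
    simpa [Matrix.det_mul, Matrix.det_transpose] using this
  have hdetUne : U.det ≠ 0 := by
    intro h; rw [h, mul_zero] at hdetU; exact zero_ne_one hdetU
  have hdetUabs : |U.det| = 1 := by
    have h : |U.det| * |U.det| = 1 := by rw [← abs_mul, hdetU, abs_one]
    rcases mul_self_eq_one_iff.mp h with h1 | h1
    · exact h1
    · nlinarith [abs_nonneg U.det]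
  have hdetT : T.det = ∏ i, d i := by
    have h := congrArg Matrix.det hspec
    rw [Matrix.det_mul, Matrix.det_mul, Matrix.det_transpose, Matrix.det_diagonal] at h
    calc T.det = U.det * (∏ i, d i) * U.det := h
      _ = (U.det * U.det) * ∏ i, d i := by ring
      _ = ∏ i, d i := by rw [hdetU, one_mul]
  have hdprodpos : 0 < ∏ i, d i := Finset.prod_pos (fun i _ => hdpos i)
  -- inverse of T
  have hTinv : T⁻¹ = U * Matrix.diagonal (fun i => (d i)⁻¹) * Uᵀ := by
    apply Matrix.inv_eq_right_inv
    rw [hspec]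
    calc (U * Matrix.diagonal d * Uᵀ) * (U * Matrix.diagonal (fun i => (d i)⁻¹) * Uᵀ)
        = U * (Matrix.diagonal d * ((Uᵀ * U) * (Matrix.diagonal (fun i => (d i)⁻¹) * Uᵀ))) := by
          simp only [Matrix.mul_assoc]
      _ = U * (Matrix.diagonal d * Matrix.diagonal (fun i => (d i)⁻¹)) * Uᵀ := by
          rw [hUtU, Matrix.one_mul]; simp only [Matrix.mul_assoc]
      _ = U * Uᵀ := by
          rw [Matrix.diagonal_mul_diagonal]
          have : (fun i => d i * (d i)⁻¹) = fun _ : Fin k => (1:ℝ) := by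
            funext i; exact mul_inv_cancel₀ (hdpos i).ne'
          rw [this, Matrix.diagonal_one, Matrix.mul_one]
      _ = 1 := hUUt
  have hTdetne : T.det ≠ 0 := by rw [hdetT]; exact hdprodpos.ne'
  have hSeq : S = -T := by rw [hTdef]; simp
  have hSinv : S⁻¹ = -(T⁻¹) := by
    apply Matrix.inv_eq_right_inv
    calc S * -T⁻¹ = T * T⁻¹ := by rw [hSeq]; simp [Matrix.neg_mul, Matrix.mul_neg]
      _ = 1 := Matrix.mul_nonsing_inv T (Ne.isUnit hTdetne)
  have hmat : Uᵀ * (T * U) = Matrix.diagonal d := by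
    rw [hspec]
    have h : Uᵀ * (U * Matrix.diagonal d * Uᵀ * U) = (Uᵀ * U) * Matrix.diagonal d * (Uᵀ * U) := by
      simp only [Matrix.mul_assoc]
    rw [h, hUtU, Matrix.one_mul, Matrix.mul_one]
  set w : Fin k → ℝ := Uᵀ.mulVec u with hwdef
  have hud : ∀ z : Fin k → ℝ, u ⬝ᵥ U.mulVec z = w ⬝ᵥ z := by
    intro z
    rw [Matrix.dotProduct_mulVec, ← Matrix.mulVec_transpose]
  have hpoint : ∀ y : Fin k → ℝ,
      Real.exp ((U.mulVec y) ⬝ᵥ S.mulVec (U.mulVec y) + (U.mulVec y) ⬝ᵥ u + c)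
        = (∏ i, Real.exp (-(d i)*(y i)^2 + (w i)*(y i))) * Real.exp c := by
    intro y
    have hq : (U.mulVec y) ⬝ᵥ S.mulVec (U.mulVec y)
        = -(y ⬝ᵥ (Matrix.diagonal d).mulVec y) := by
      rw [hSeq, Matrix.neg_mulVec, dotProduct_neg, dot_rot]
      simp only [Matrix.mulVec_mulVec]
      rw [hmat]
    have hlin : (U.mulVec y) ⬝ᵥ u = y ⬝ᵥ w := by rw [dot_rot]
    have hquadsum : y ⬝ᵥ (Matrix.diagonal d).mulVec y = ∑ i, (d i)*(y i)^2 := by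
      simp only [dotProduct, Matrix.mulVec_diagonal]
      exact Finset.sum_congr rfl fun i _ => by ring
    have hlinsum : y ⬝ᵥ w = ∑ i, (w i)*(y i) := by
      simp only [dotProduct]
      exact Finset.sum_congr rfl fun i _ => mul_comm _ _
    rw [hq, hquadsum, hlin, hlinsum, ← Finset.sum_neg_distrib, ← Finset.sum_add_distrib,
      Real.exp_add, Real.exp_sum]
    congr 1
    exact Finset.prod_congr rfl fun i _ => by ring_nf
  have hcov := intCoV U hdetUne (fun x => Real.exp (x ⬝ᵥ S.mulVec x + x ⬝ᵥ u + c))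
  rw [hdetUabs, inv_one, one_mul] at hcov
  rw [← hcov]
  simp only [hpoint]
  rw [integral_mul_const,
    integral_fintype_prod_volume_eq_prod (f := fun i (t : ℝ) => Real.exp (-(d i)*t^2 + (w i)*t))]
  have h1d : ∀ i : Fin k, (∫ t : ℝ, Real.exp (-(d i)*t^2 + (w i)*t))
      = Real.sqrt (π/(d i)) * Real.exp ((w i)^2/(4*(d i))) := fun i => int1d (hdpos i) (w i)
  rw [Finset.prod_congr rfl (fun i _ => h1d i), Finset.prod_mul_distrib, ← Real.exp_sum]
  have hsqrt : ∀ i : Fin k, Real.sqrt (π / d i)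
      = Real.exp ((Real.log π - Real.log (d i))/2) := by
    intro i
    have hA : 0 < π / d i := div_pos Real.pi_pos (hdpos i)
    rw [← Real.exp_log (Real.sqrt_pos.mpr hA), Real.log_sqrt hA.le,
      Real.log_div Real.pi_ne_zero (hdpos i).ne']
  rw [Finset.prod_congr rfl (fun i _ => hsqrt i), ← Real.exp_sum, ← Real.exp_add, ← Real.exp_add]
  congr 1
  have hdetA : (((-2:ℝ) • S).det) = 2^k * ∏ i, d i := by
    have h2 : ((-2:ℝ) • S) = (2:ℝ) • T := by rw [hSeq]; simp
    rw [h2, Matrix.det_smul, hdetT]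
    simp
  have hlogdet : Real.log (((-2:ℝ) • S).det)
      = (k:ℝ) * Real.log 2 + ∑ i, Real.log (d i) := by
    rw [hdetA, Real.log_mul (by positivity) hdprodpos.ne', Real.log_pow,
      Real.log_prod (fun i _ => (hdpos i).ne')]
  have hquadinv : u ⬝ᵥ S⁻¹.mulVec u = -(∑ i, (d i)⁻¹ * (w i)^2) := by
    rw [hSinv, Matrix.neg_mulVec, dotProduct_neg]
    congr 1
    have hmv : T⁻¹.mulVec u
        = U.mulVec ((Matrix.diagonal (fun i => (d i)⁻¹)).mulVec w) := by
      rw [hTinv, hwdef]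
      simp only [Matrix.mulVec_mulVec, Matrix.mul_assoc]
    rw [hmv, hud]
    simp only [dotProduct, Matrix.mulVec_diagonal]
    exact Finset.sum_congr rfl fun i _ => by ring
  rw [hlogdet, hquadinv]
  have e1 : ∑ i : Fin k, (Real.log π - Real.log (d i))/2
      = (k:ℝ)/2 * Real.log π - (1/2) * ∑ i, Real.log (d i) := by
    rw [← Finset.sum_div, Finset.sum_sub_distrib, Finset.sum_const, Finset.card_univ,
      Fintype.card_fin, nsmul_eq_mul]
    ring
  have e2 : ∑ i : Fin k, (w i)^2/(4*(d i)) = (1/4) * ∑ i, (d i)⁻¹ * (w i)^2 := by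
    rw [Finset.mul_sum]
    refine Finset.sum_congr rfl fun i _ => ?_
    have := (hdpos i).ne'
    field_simp
  have e3 : Real.log (2*π) = Real.log 2 + Real.log π :=
    Real.log_mul two_ne_zero Real.pi_ne_zero
  rw [e1, e2, e3]
  ring

lemma sum_mulVec {ι n m : Type*} [Fintype m] (s : Finset ι) (M : ι → Matrix n m ℝ) (v : m → ℝ) :
    (∑ i ∈ s, M i).mulVec v = ∑ i ∈ s, (M i).mulVec v := by
  ext j
  simp only [Matrix.mulVec, dotProduct, Matrix.sum_apply, Finset.sum_mul, Finset.sum_apply]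
  rw [Finset.sum_comm]

lemma dot_sum {ι m : Type*} [Fintype m] (s : Finset ι) (v : m → ℝ) (w : ι → m → ℝ) :
    v ⬝ᵥ (∑ i ∈ s, w i) = ∑ i ∈ s, v ⬝ᵥ w i := by
  simp only [dotProduct, Finset.sum_apply, Finset.mul_sum]
  rw [Finset.sum_comm]

lemma expand_u {kj ki : ℕ} (Sinv : Matrix (Fin ki) (Fin ki) ℝ) (hsym : Sinvᵀ = Sinv)
    (E : Matrix (Fin kj) (Fin ki) ℝ) (v : Fin ki → ℝ) (xj : Fin kj → ℝ) :
    (v + Eᵀ.mulVec xj) ⬝ᵥ Sinv.mulVec (v + Eᵀ.mulVec xj)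
      = v ⬝ᵥ Sinv.mulVec v + 2 * (xj ⬝ᵥ ((E * Sinv).mulVec v))
        + xj ⬝ᵥ ((E * Sinv * Eᵀ).mulVec xj) := by
  have h1 : (Eᵀ.mulVec xj) ⬝ᵥ Sinv.mulVec v = xj ⬝ᵥ ((E * Sinv).mulVec v) := by
    rw [dot_rot, Matrix.transpose_transpose, Matrix.mulVec_mulVec]
  have h2 : v ⬝ᵥ Sinv.mulVec (Eᵀ.mulVec xj) = xj ⬝ᵥ ((E * Sinv).mulVec v) := by
    rw [dotProduct_comm, dot_rot, hsym, dot_rot, Matrix.transpose_transpose,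
      Matrix.mulVec_mulVec]
  have h3 : (Eᵀ.mulVec xj) ⬝ᵥ Sinv.mulVec (Eᵀ.mulVec xj)
      = xj ⬝ᵥ ((E * Sinv * Eᵀ).mulVec xj) := by
    rw [dot_rot, Matrix.transpose_transpose, Matrix.mulVec_mulVec, Matrix.mulVec_mulVec,
      Matrix.mul_assoc]
  rw [add_dotProduct, Matrix.mulVec_add, dotProduct_add, dotProduct_add]
  rw [h1, h2, h3]
  ring

lemma inv_symm_of_negPosDef {n : ℕ} {M : Matrix (Fin n) (Fin n) ℝ} (h : (-M).PosDef) :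
    (M⁻¹)ᵀ = M⁻¹ := by
  have hH : Mᵀ = M := by
    have h1 := h.1
    have : ∀ i j, (-M) i j = (-M) j i := by
      intro i j
      conv_lhs => rw [← h1]
      simp [Matrix.conjTranspose_apply]
    ext i j
    have := this j i
    simp only [Matrix.neg_apply, neg_inj] at this
    simpa [Matrix.transpose_apply] using this
  rw [Matrix.transpose_nonsing_inv, hH]

structure EdgeData (kj ki : ℕ) where
  A : Matrix (Fin ki) (Fin ki) ℝ
  b : Fin ki → ℝ
  C : Matrix (Fin kj) (Fin kj) ℝ
  d : Fin kj → ℝ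
  E : Matrix (Fin kj) (Fin ki) ℝ
  f : ℝ

/-- The transition density `exp(xᵢᵀAxᵢ + xᵢᵀb + xⱼᵀCxⱼ + xⱼᵀd + xⱼᵀExᵢ + f)` from parent
value `xj` to child value `xi`. -/
noncomputable def transDensity {kj ki : ℕ} (e : EdgeData kj ki)
    (xi : Fin ki → ℝ) (xj : Fin kj → ℝ) : ℝ :=
  Real.exp (xi ⬝ᵥ e.A.mulVec xi + xi ⬝ᵥ e.b + xj ⬝ᵥ e.C.mulVec xj + xj ⬝ᵥ e.d
    + xj ⬝ᵥ e.E.mulVec xi + e.f)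

/-- A rooted (sub)tree whose root node has trait dimension `kj`: each child of the root is
either a tip with observed trait vector, or an internal node carrying its own subtree;
every child edge carries transition-density coefficients. -/
inductive GTree : ℕ → Type where
  | node (kj nT nI : ℕ)
      (tipDim : Fin nT → ℕ)
      (tipEdge : (i : Fin nT) → EdgeData kj (tipDim i))
      (tipX : (i : Fin nT) → Fin (tipDim i) → ℝ)
      (intDim : Fin nI → ℕ)
      (intEdge : (i : Fin nI) → EdgeData kj (intDim i))
      (sub : (i : Fin nI) → GTree (intDim i)) : GTree kj

/-- The density of all tip data descending from the root of `T`, conditional on the root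
trait value `xj`: the product over tip children of the transition density, times the
product over internal children of the integral over the child value of the transition
density times the subtree density. -/
noncomputable def treeDensity : {kj : ℕ} → GTree kj → (Fin kj → ℝ) → ℝ
  | _, .node _ _ _ _ tipEdge tipX _ intEdge sub, xj =>
      (∏ i, transDensity (tipEdge i) (tipX i) xj) *
      ∏ i, ∫ xi : Fin _ → ℝ, transDensity (intEdge i) xi xj * treeDensity (sub i) xi

/-- The recursively defined coefficients `(L, m, r)`: sums over tip children of
`(Cᵢ, dᵢ + Eᵢxᵢ, xᵢᵀAᵢxᵢ + xᵢᵀbᵢ + fᵢ)` and over internal children of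
`(Cᵢ - ¼Eᵢ(Aᵢ+Lᵢ)⁻¹Eᵢᵀ, dᵢ - ½Eᵢ(Aᵢ+Lᵢ)⁻¹(bᵢ+mᵢ),
fᵢ + rᵢ + (kᵢ/2)log(2π) - ½log|(-2)(Aᵢ+Lᵢ)| - ¼(bᵢ+mᵢ)ᵀ(Aᵢ+Lᵢ)⁻¹(bᵢ+mᵢ))`. -/
noncomputable def treeCoefs :
    {kj : ℕ} → GTree kj → Matrix (Fin kj) (Fin kj) ℝ × (Fin kj → ℝ) × ℝ
  | _, .node _ _ _ _ tipEdge tipX intDim intEdge sub =>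
      ( (∑ i, (tipEdge i).C)
          + ∑ i, ((intEdge i).C
            - ((1:ℝ)/4) • ((intEdge i).E
                * ((intEdge i).A + (treeCoefs (sub i)).1)⁻¹ * ((intEdge i).E)ᵀ)),
        (∑ i, ((tipEdge i).d + (tipEdge i).E.mulVec (tipX i)))
          + ∑ i, ((intEdge i).d
            - ((1:ℝ)/2) • (((intEdge i).E
                * ((intEdge i).A + (treeCoefs (sub i)).1)⁻¹).mulVec
                  ((intEdge i).b + (treeCoefs (sub i)).2.1))),
        (∑ i, (tipX i ⬝ᵥ (tipEdge i).A.mulVec (tipX i)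
            + tipX i ⬝ᵥ (tipEdge i).b + (tipEdge i).f))
          + ∑ i, ((intEdge i).f + (treeCoefs (sub i)).2.2
            + ((intDim i : ℝ)/2) * Real.log (2 * Real.pi)
            - (1/2) * Real.log (((-2:ℝ) • ((intEdge i).A + (treeCoefs (sub i)).1)).det)
            - (1/4) * (((intEdge i).b + (treeCoefs (sub i)).2.1) ⬝ᵥ
                ((intEdge i).A + (treeCoefs (sub i)).1)⁻¹.mulVec
                  ((intEdge i).b + (treeCoefs (sub i)).2.1))) )

/-- The hypothesis that, throughout the tree, each `Aᵢ + Lᵢ` (for internal children `i`)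
is symmetric negative-definite. -/
def goodTree : {kj : ℕ} → GTree kj → Prop
  | _, .node _ _ _ _ _ _ _ intEdge sub =>
      (∀ i, (-((intEdge i).A + (treeCoefs (sub i)).1)).PosDef) ∧ ∀ i, goodTree (sub i)

lemma int_term_eq {kj ki : ℕ} (e : EdgeData kj ki) (L : Matrix (Fin ki) (Fin ki) ℝ)
    (m : Fin ki → ℝ) (r : ℝ) (hpd : (-(e.A + L)).PosDef) (xj : Fin kj → ℝ) :
    ((ki:ℝ)/2 * Real.log (2*Real.pi)
      - (1/2) * Real.log (((-2:ℝ) • (e.A + L)).det)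
      - (1/4) * ((e.b + m + e.Eᵀ.mulVec xj) ⬝ᵥ (e.A + L)⁻¹.mulVec (e.b + m + e.Eᵀ.mulVec xj))
      + (xj ⬝ᵥ e.C.mulVec xj + xj ⬝ᵥ e.d + e.f + r))
    = xj ⬝ᵥ (e.C - ((1:ℝ)/4) • (e.E * (e.A + L)⁻¹ * e.Eᵀ)).mulVec xj
      + xj ⬝ᵥ (e.d - ((1:ℝ)/2) • ((e.E * (e.A + L)⁻¹).mulVec (e.b + m)))
      + (e.f + r + (ki:ℝ)/2 * Real.log (2*Real.pi)
          - (1/2) * Real.log (((-2:ℝ) • (e.A + L)).det)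
          - (1/4) * ((e.b + m) ⬝ᵥ (e.A + L)⁻¹.mulVec (e.b + m))) := by
  rw [expand_u _ (inv_symm_of_negPosDef hpd)]
  simp only [Matrix.sub_mulVec, dotProduct_sub, Matrix.smul_mulVec, dotProduct_smul,
    smul_eq_mul]
  ring

/-- For every (sub)tree rooted at a node `j`, the density of the tip data
descending from `j` conditional on the root trait value `xj` equals
`exp(xjᵀ L xj + xjᵀ m + r)`, where `(L, m, r)` are given by the recursive pruning formulas
of `treeCoefs`. -/
theorem tree_density_quadratic {kj : ℕ} (T : GTree kj) (hT : goodTree T) :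
    ∀ xj : Fin kj → ℝ,
      treeDensity T xj
        = Real.exp (xj ⬝ᵥ (treeCoefs T).1.mulVec xj + xj ⬝ᵥ (treeCoefs T).2.1
            + (treeCoefs T).2.2) := by
  revert hT
  induction T with
  | node kj nT nI tipDim tipEdge tipX intDim intEdge sub ih =>
    intro hT xj
    obtain ⟨hpd, hgood⟩ := hT
    have hint : ∀ i : Fin nI,
        (∫ xi : Fin (intDim i) → ℝ, transDensity (intEdge i) xi xj * treeDensity (sub i) xi)
          = Real.exp (((intDim i : ℝ))/2 * Real.log (2*Real.pi)
              - (1/2) * Real.log (((-2:ℝ) • ((intEdge i).A + (treeCoefs (sub i)).1)).det)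
              - (1/4) * (((intEdge i).b + (treeCoefs (sub i)).2.1 + (intEdge i).Eᵀ.mulVec xj)
                  ⬝ᵥ ((intEdge i).A + (treeCoefs (sub i)).1)⁻¹.mulVec
                    ((intEdge i).b + (treeCoefs (sub i)).2.1 + (intEdge i).Eᵀ.mulVec xj))
              + (xj ⬝ᵥ (intEdge i).C.mulVec xj + xj ⬝ᵥ (intEdge i).d + (intEdge i).f
                  + (treeCoefs (sub i)).2.2)) := by
      intro i
      have hcongr : ∀ xi : Fin (intDim i) → ℝ,
          transDensity (intEdge i) xi xj * treeDensity (sub i) xi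
            = Real.exp (xi ⬝ᵥ ((intEdge i).A + (treeCoefs (sub i)).1).mulVec xi
                + xi ⬝ᵥ ((intEdge i).b + (treeCoefs (sub i)).2.1 + (intEdge i).Eᵀ.mulVec xj)
                + (xj ⬝ᵥ (intEdge i).C.mulVec xj + xj ⬝ᵥ (intEdge i).d + (intEdge i).f
                    + (treeCoefs (sub i)).2.2)) := by
        intro xi
        rw [ih i (hgood i) xi]
        simp only [transDensity]
        rw [← Real.exp_add]
        congr 1
        have hE : xj ⬝ᵥ (intEdge i).E.mulVec xi = xi ⬝ᵥ ((intEdge i).Eᵀ.mulVec xj) := by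
          rw [dotProduct_comm, dot_rot]
        rw [hE]
        simp only [Matrix.add_mulVec, dotProduct_add]
        ring
      simp only [hcongr]
      exact gaussInt _ (hpd i) _ _
    simp only [treeDensity, treeCoefs]
    rw [Finset.prod_congr rfl (fun i _ => hint i)]
    simp only [transDensity]
    rw [← Real.exp_sum, ← Real.exp_sum, ← Real.exp_add]
    congr 1
    rw [Finset.sum_congr rfl
      (fun i _ => int_term_eq (intEdge i) (treeCoefs (sub i)).1 (treeCoefs (sub i)).2.1
        (treeCoefs (sub i)).2.2 (hpd i) xj)]
    have tipEq : ∀ i : Fin nT,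
        tipX i ⬝ᵥ (tipEdge i).A.mulVec (tipX i) + tipX i ⬝ᵥ (tipEdge i).b
          + xj ⬝ᵥ (tipEdge i).C.mulVec xj + xj ⬝ᵥ (tipEdge i).d
          + xj ⬝ᵥ (tipEdge i).E.mulVec (tipX i) + (tipEdge i).f
        = xj ⬝ᵥ (tipEdge i).C.mulVec xj
          + xj ⬝ᵥ ((tipEdge i).d + (tipEdge i).E.mulVec (tipX i))
          + (tipX i ⬝ᵥ (tipEdge i).A.mulVec (tipX i) + tipX i ⬝ᵥ (tipEdge i).b
              + (tipEdge i).f) := by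
      intro i
      rw [dotProduct_add]
      ring
    rw [Finset.sum_congr rfl (fun i _ => tipEq i)]
    simp only [Finset.sum_add_distrib]
    simp only [Matrix.add_mulVec, dotProduct_add, _root_.sum_mulVec, dot_sum,
      Finset.sum_add_distrib]
    ring
end
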